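/- Assume hypotheses (H1)–(H3) and let q0, q be chosen with 1 − 1/p < 1/q0 < min{β, δα, δ/p, 1/2} and 1/(q0·δ) ≤ 1/q < min{α, 1/p}. Let [t0,t1] ⊆ [0,T] and let x : [t0,t1] → ℝ^d be continuous of finite q-variation. Then the path t ↦ g(t, x_t) is of finite q0-variation on [t0,t1] and |||g(·, x_·)|||_{q0-var,[t0,t1]} ≤ M · (1 + |||x|||_{q-var,[t0,t1]}), where M := max{L_g, a·T^{1−α}, |g(0,0)| + h(0,T)^β, ‖b‖_{L_{1/(1−α)}}}. -/

import Mathlib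

open scoped BigOperators
open Set

noncomputable section

/-- Euclidean space `ℝ^n`. -/
abbrev Ed (n : ℕ) : Type := EuclideanSpace ℝ (Fin n)

section PVarDefs

variable {E F : Type*} [NormedAddCommGroup E] [NormedSpace ℝ E]
  [NormedAddCommGroup F] [NormedSpace ℝ F]

/-- The set of sums `Σ_i ‖x (t (i+1)) - x (t i)‖ ^ p` over all finite partitions
`a = t 0 < t 1 < ⋯ < t n = b` of `[a,b]`. -/
def pVarSums (p : ℝ) (x : ℝ → E) (a b : ℝ) : Set ℝ :=
  { v | ∃ n : ℕ, ∃ t : Fin (n + 1) → ℝ, StrictMono t ∧ t 0 = a ∧ t (Fin.last n) = b ∧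
      v = ∑ i : Fin n, ‖x (t i.succ) - x (t i.castSucc)‖ ^ p }

/-- The `p`-variation seminorm `|||x|||_{p-var,[a,b]}`. -/
def pVar (p : ℝ) (x : ℝ → E) (a b : ℝ) : ℝ :=
  sSup (pVarSums p x a b) ^ (1 / p)

/-- `x` is of finite `p`-variation on `[a,b]`. -/
def FinitePVar (p : ℝ) (x : ℝ → E) (a b : ℝ) : Prop :=
  BddAbove (pVarSums p x a b)

/-- The `p`-variation norm `‖x‖_{p-var,[a,b]} = ‖x a‖ + |||x|||_{p-var,[a,b]}`. -/
def pVarNorm (p : ℝ) (x : ℝ → E) (a b : ℝ) : ℝ :=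
  ‖x a‖ + pVar p x a b

/-- A control function on `[a,b]`: continuous on the simplex, vanishing on the diagonal,
superadditive and nonnegative. -/
def IsControlOn (a b : ℝ) (w : ℝ → ℝ → ℝ) : Prop :=
  ContinuousOn (fun pr : ℝ × ℝ => w pr.1 pr.2) {pr : ℝ × ℝ | a ≤ pr.1 ∧ pr.1 ≤ pr.2 ∧ pr.2 ≤ b} ∧
  (∀ t : ℝ, a ≤ t → t ≤ b → w t t = 0) ∧
  (∀ s t u : ℝ, a ≤ s → s ≤ t → t ≤ u → u ≤ b → w s t + w t u ≤ w s u) ∧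
  (∀ s t : ℝ, a ≤ s → s ≤ t → t ≤ b → 0 ≤ w s t)

/-- A tagged partition `a = t 0 < t 1 < ⋯ < t n = b` of `[a,b]`, with tags
`tag i ∈ [t i, t (i+1)]`. -/
structure TaggedPartition (a b : ℝ) where
  n : ℕ
  t : Fin (n + 1) → ℝ
  tag : Fin n → ℝ
  mono : StrictMono t
  first : t 0 = a
  last : t (Fin.last n) = b
  tag_mem : ∀ i : Fin n, tag i ∈ Set.Icc (t i.castSucc) (t i.succ)

/-- The mesh of a tagged partition. -/
def TaggedPartition.mesh {a b : ℝ} (P : TaggedPartition a b) : ℝ :=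
  ⨆ i : Fin P.n, (P.t i.succ - P.t i.castSucc)

/-- Riemann–Stieltjes sum of `x` against `ω` along a tagged partition. -/
def RSSum (x : ℝ → E →L[ℝ] F) (ω : ℝ → E) {a b : ℝ} (P : TaggedPartition a b) : F :=
  ∑ i : Fin P.n, x (P.tag i) (ω (P.t i.succ) - ω (P.t i.castSucc))

/-- `v` is the Young integral `∫_a^b x dω`: the Riemann–Stieltjes sums converge to `v`
as the mesh tends to `0`. -/
def IsYoungIntegral (x : ℝ → E →L[ℝ] F) (ω : ℝ → E) (a b : ℝ) (v : F) : Prop :=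
  ∀ ε : ℝ, 0 < ε → ∃ δ : ℝ, 0 < δ ∧
    ∀ P : TaggedPartition a b, P.mesh < δ → ‖RSSum x ω P - v‖ < ε

/-- The Young integral `∫_a^b x dω` (an arbitrary value, `0`, if the limit does not exist). -/
def youngIntegral (x : ℝ → E →L[ℝ] F) (ω : ℝ → E) (a b : ℝ) : F :=
  letI := Classical.propDecidable (∃ v, IsYoungIntegral x ω a b v)
  if hv : ∃ v, IsYoungIntegral x ω a b v then hv.choose else 0

end PVarDefs


lemma aux_rpow_add {a b r : ℝ} (ha : 0 ≤ a) (hb : 0 ≤ b) (hr : 1 ≤ r) :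
    a ^ r + b ^ r ≤ (a + b) ^ r := by
  lift a to NNReal using ha
  lift b to NNReal using hb
  have h := NNReal.rpow_add_rpow_le a b one_pos hr
  simp only [NNReal.rpow_one, one_div_one, NNReal.rpow_one] at h
  have hr0 : r ≠ 0 := by linarith
  have h2 : (a ^ r + b ^ r) ≤ (a + b) ^ r := by
    have := NNReal.rpow_le_rpow h (le_trans zero_le_one hr)
    rwa [← NNReal.rpow_mul, one_div, inv_mul_cancel₀ hr0, NNReal.rpow_one] at this
  exact_mod_cast h2

lemma aux_sum_rpow {ι : Type*} (s : Finset ι) (u : ι → ℝ) (hu : ∀ i ∈ s, 0 ≤ u i) {r : ℝ}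
    (hr : 1 ≤ r) : ∑ i ∈ s, u i ^ r ≤ (∑ i ∈ s, u i) ^ r := by
  induction s using Finset.cons_induction with
  | empty => simp [Real.zero_rpow (by linarith : r ≠ 0)]
  | cons a s has ih =>
    rw [Finset.sum_cons, Finset.sum_cons]
    have hsnn : 0 ≤ ∑ i ∈ s, u i :=
      Finset.sum_nonneg fun i hi => hu i (Finset.mem_cons_of_mem hi)
    calc u a ^ r + ∑ i ∈ s, u i ^ r
        ≤ u a ^ r + (∑ i ∈ s, u i) ^ r := by
          gcongr
          exact ih fun i hi => hu i (Finset.mem_cons_of_mem hi)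
      _ ≤ (u a + ∑ i ∈ s, u i) ^ r :=
          aux_rpow_add (hu a (Finset.mem_cons_self a s)) hsnn hr

lemma aux_lq_emb {ι : Type*} (s : Finset ι) (u : ι → ℝ) (hu : ∀ i ∈ s, 0 ≤ u i) {q q0 : ℝ}
    (hq : 0 < q) (hle : q ≤ q0) :
    ∑ i ∈ s, u i ^ q0 ≤ (∑ i ∈ s, u i ^ q) ^ (q0 / q) := by
  have h1 : ∀ i ∈ s, u i ^ q0 = (u i ^ q) ^ (q0 / q) := by
    intro i hi
    rw [← Real.rpow_mul (hu i hi), mul_comm, div_mul_cancel₀ _ hq.ne']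
  rw [Finset.sum_congr rfl h1]
  exact aux_sum_rpow s _ (fun i hi => Real.rpow_nonneg (hu i hi) q)
    ((one_le_div hq).mpr hle)


lemma aux_ctrl_sum {T : ℝ} {h : ℝ → ℝ → ℝ}
    (hsup : ∀ s t u : ℝ, 0 ≤ s → s ≤ t → t ≤ u → u ≤ T → h s t + h t u ≤ h s u)
    (hnn : ∀ s t : ℝ, 0 ≤ s → s ≤ t → t ≤ T → 0 ≤ h s t) :
    ∀ n : ℕ, ∀ t : Fin (n + 1) → ℝ, Monotone t → 0 ≤ t 0 → t (Fin.last n) ≤ T →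
      ∑ i : Fin n, h (t i.castSucc) (t i.succ) ≤ h (t 0) (t (Fin.last n)) := by
  intro n
  induction n with
  | zero =>
    intro t _ h0 hT
    simpa using hnn (t 0) (t (Fin.last 0)) h0 (by simp [Fin.last_zero]) (by simpa using hT)
  | succ n ih =>
    intro t hmono h0 hT
    have hcs : Monotone (fun i : Fin (n + 1) => t i.castSucc) :=
      hmono.comp fun a b hab => Fin.castSucc_le_castSucc_iff.mpr hab
    have key := ih (fun i : Fin (n + 1) => t i.castSucc) hcs
      (by simpa using h0)
      (le_trans (hmono (Fin.le_last _)) hT)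
    rw [Fin.sum_univ_castSucc]
    calc (∑ i : Fin n, h (t i.castSucc.castSucc) (t i.castSucc.succ))
          + h (t (Fin.last n).castSucc) (t (Fin.last n).succ)
        ≤ h (t (0 : Fin (n+1)).castSucc) (t (Fin.last n).castSucc)
          + h (t (Fin.last n).castSucc) (t (Fin.last n).succ) := by
          refine add_le_add ?_ le_rfl
          calc ∑ i : Fin n, h (t i.castSucc.castSucc) (t i.castSucc.succ)
              = ∑ i : Fin n, h (t (i.castSucc : Fin (n+1)).castSucc)
                  (t (i.succ : Fin (n+1)).castSucc) :=
                Finset.sum_congr rfl fun i _ => by rw [Fin.succ_castSucc]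
            _ ≤ _ := key
      _ ≤ h (t 0) (t (Fin.last (n + 1))) := by
          rw [Fin.castSucc_zero, Fin.succ_last]
          exact hsup _ _ _ h0 (hmono (Fin.zero_le _)) (hmono (Fin.le_last _)) hT

lemma aux_mem_nonneg {E : Type*} [NormedAddCommGroup E] [NormedSpace ℝ E]
    (r : ℝ) (y : ℝ → E) (a b v : ℝ) (hv : v ∈ pVarSums r y a b) : 0 ≤ v := by
  obtain ⟨n, t, -, -, -, rfl⟩ := hv
  exact Finset.sum_nonneg fun i _ => Real.rpow_nonneg (norm_nonneg _) r

set_option maxHeartbeats 1000000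

/-- Lemma `lemma2`(i): under (H1)–(H3) and the choice of `q0, q`, if `x` is
continuous of finite `q`-variation on `[t0,t1] ⊆ [0,T]`, then `t ↦ g(t, x t)` has finite
`q0`-variation on `[t0,t1]` and `|||g(·,x_·)|||_{q0-var,[t0,t1]} ≤ M (1 + |||x|||_{q-var,[t0,t1]})`. -/
theorem stmt6
    {d m : ℕ} (p T : ℝ) (hp1 : 1 < p) (hp2 : p < 2) (hT : 0 < T)
    (f : ℝ → Ed d → Ed d) (g : ℝ → Ed d → (Ed m →L[ℝ] Ed d))
    (hf : ContinuousOn (fun pr : ℝ × Ed d => f pr.1 pr.2) (Set.Icc 0 T ×ˢ Set.univ))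
    (hg : ContinuousOn (fun pr : ℝ × Ed d => g pr.1 pr.2) (Set.Icc 0 T ×ˢ Set.univ))
    (Dg : ℝ → Ed d → (Ed d →L[ℝ] Ed m →L[ℝ] Ed d))
    (hDg : ∀ t ∈ Set.Icc (0:ℝ) T, ∀ x : Ed d, HasFDerivAt (g t) (Dg t x) x)
    (β δ Lg : ℝ) (hβ0 : 0 < β) (hβ1 : β ≤ 1) (hδ0 : 0 < δ) (hδ1 : δ ≤ 1) (hLg : 0 < Lg)
    (h : ℝ → ℝ → ℝ) (hctrl : IsControlOn 0 T h)
    (MN : ℝ → ℝ) (hMN : ∀ N : ℝ, 0 ≤ N → 0 < MN N)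
    (H1i : ∀ t ∈ Set.Icc (0:ℝ) T, ∀ x y : Ed d, ‖g t x - g t y‖ ≤ Lg * ‖x - y‖)
    (H1ii : ∀ N : ℝ, 0 ≤ N → ∀ t ∈ Set.Icc (0:ℝ) T, ∀ x y : Ed d, ‖x‖ ≤ N → ‖y‖ ≤ N →
      ‖Dg t x - Dg t y‖ ≤ MN N * ‖x - y‖ ^ δ)
    (H1iii : ∀ s t : ℝ, 0 ≤ s → s < t → t ≤ T → ∀ x : Ed d,
      ‖g t x - g s x‖ + ‖Dg t x - Dg s x‖ ≤ h s t ^ β)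
    (a α : ℝ) (b : ℝ → ℝ) (ha : 0 < a) (hα1 : 1 / 2 ≤ α) (hα2 : α < 1)
    (hbmem : IntervalIntegrable (fun s => |b s| ^ (1 / (1 - α))) MeasureTheory.volume 0 T)
    (LN : ℝ → ℝ) (hLN : ∀ N : ℝ, 0 ≤ N → 0 < LN N)
    (H2i : ∀ N : ℝ, 0 ≤ N → ∀ t ∈ Set.Icc (0:ℝ) T, ∀ x y : Ed d, ‖x‖ ≤ N → ‖y‖ ≤ N →
      ‖f t x - f t y‖ ≤ LN N * ‖x - y‖)
    (H2ii : ∀ t ∈ Set.Icc (0:ℝ) T, ∀ x : Ed d, ‖f t x‖ ≤ a * ‖x‖ + b t)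
    (H3a : p - 1 < δ) (H3b : 1 - 1 / p < β) (H3c : 1 - 1 / p < δ * α)
    (q0 q : ℝ)
    (hq0a : 1 - 1 / p < 1 / q0)
    (hq0b : 1 / q0 < min (min β (δ * α)) (min (δ / p) (1 / 2)))
    (hqa : 1 / (q0 * δ) ≤ 1 / q) (hqb : 1 / q < min α (1 / p))
    (t0 t1 : ℝ) (ht0 : 0 ≤ t0) (ht01 : t0 ≤ t1) (ht1 : t1 ≤ T)
    (x : ℝ → Ed d) (hx : ContinuousOn x (Set.Icc t0 t1)) (hxq : FinitePVar q x t0 t1) :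
    FinitePVar q0 (fun t => g t (x t)) t0 t1 ∧
    pVar q0 (fun t => g t (x t)) t0 t1 ≤
      (max (max Lg (a * T ^ (1 - α))) (max (‖g 0 0‖ + h 0 T ^ β) ((∫ s in (0:ℝ)..T, |b s| ^ (1 / (1 - α))) ^ (1 - α)))) * (1 + pVar q x t0 t1) := by
  obtain ⟨-, -, hsup', hnn'⟩ := hctrl
  have hp0 : (0:ℝ) < p := by linarith
  have h1p : (0:ℝ) < 1 - 1 / p := by
    have : 1 / p < 1 := by rw [div_lt_one hp0]; exact hp1
    linarith
  have hq0pos : 0 < q0 := by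
    have h1 : 0 < 1 / q0 := lt_trans h1p hq0a
    exact one_div_pos.mp h1
  have hq0half : 1 / q0 < 1 / 2 := lt_of_lt_of_le hq0b (le_trans (min_le_right _ _) (min_le_right _ _))
  have hq0two : (2:ℝ) < q0 := lt_of_one_div_lt_one_div hq0pos hq0half
  have hq0one : (1:ℝ) ≤ q0 := by linarith
  have hβq0 : (1:ℝ) ≤ β * q0 := by
    have hβlt : 1 / q0 < β := lt_of_lt_of_le hq0b (le_trans (min_le_left _ _) (min_le_left _ _))
    have := (div_lt_iff₀ hq0pos).mp hβlt
    linarith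
  have hq0δpos : 0 < q0 * δ := mul_pos hq0pos hδ0
  have hqpos : 0 < q := one_div_pos.mp (lt_of_lt_of_le (one_div_pos.mpr hq0δpos) hqa)
  have hqq0 : q ≤ q0 := by
    have h1 : (1:ℝ) / q0 ≤ 1 / (q0 * δ) := by
      apply one_div_le_one_div_of_le hq0δpos
      calc q0 * δ ≤ q0 * 1 := by gcongr
        _ = q0 := mul_one q0
    have h2 : 1 / q0 ≤ 1 / q := le_trans h1 hqa
    exact le_of_one_div_le_one_div hq0pos h2
  have h0T : 0 ≤ h 0 T := hnn' 0 T le_rfl hT.le le_rfl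
  have hSqnn : 0 ≤ sSup (pVarSums q x t0 t1) :=
    Real.sSup_nonneg fun v hv => aux_mem_nonneg q x t0 t1 v hv
  have hPqnn : 0 ≤ pVar q x t0 t1 := Real.rpow_nonneg hSqnn _
  set Pq := pVar q x t0 t1 with hPqdef
  set D : ℝ := h 0 T ^ β + Lg * Pq with hDdef
  have hDnn : 0 ≤ D := add_nonneg (Real.rpow_nonneg h0T β) (mul_nonneg hLg.le hPqnn)
  have hh01T : h t0 t1 ≤ h 0 T := by
    have a1 := hsup' 0 t0 t1 le_rfl ht0 ht01 (le_trans ht1 le_rfl)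
    have a2 := hsup' 0 t1 T le_rfl (ht0.trans ht01) ht1 le_rfl
    have b1 := hnn' 0 t0 le_rfl ht0 (le_trans ht01 ht1)
    have b2 := hnn' t1 T (ht0.trans ht01) ht1 le_rfl
    linarith
  -- key per-partition bound
  have key : ∀ v ∈ pVarSums q0 (fun t => g t (x t)) t0 t1, v ≤ D ^ q0 := by
    rintro v ⟨n, t, hmono, hfirst, hlast, rfl⟩
    have htmem : ∀ i : Fin (n + 1), 0 ≤ t i ∧ t i ≤ T := fun i =>
      ⟨le_trans ht0 (hfirst ▸ hmono.monotone (Fin.zero_le i)),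
       le_trans (hlast ▸ hmono.monotone (Fin.le_last i)) ht1⟩
    set u : Fin n → ℝ := fun i => h (t i.castSucc) (t i.succ) ^ β with hudef
    set w : Fin n → ℝ := fun i => Lg * ‖x (t i.succ) - x (t i.castSucc)‖ with hwdef
    have hinn : ∀ i : Fin n, 0 ≤ h (t i.castSucc) (t i.succ) := fun i =>
      hnn' _ _ (htmem _).1 (hmono (Fin.castSucc_lt_succ (i := i))).le (htmem _).2
    have hunn : ∀ i : Fin n, 0 ≤ u i := fun i => Real.rpow_nonneg (hinn i) β
    have hwnn : ∀ i : Fin n, 0 ≤ w i := fun i => mul_nonneg hLg.le (norm_nonneg _)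
    have hstep : ∀ i : Fin n,
        ‖g (t i.succ) (x (t i.succ)) - g (t i.castSucc) (x (t i.castSucc))‖ ≤ u i + w i := by
      intro i
      have hlt : t i.castSucc < t i.succ := hmono (Fin.castSucc_lt_succ (i := i))
      have h1 : ‖g (t i.succ) (x (t i.succ)) - g (t i.succ) (x (t i.castSucc))‖ ≤ w i :=
        H1i _ ⟨(htmem _).1, (htmem _).2⟩ _ _
      have h2 : ‖g (t i.succ) (x (t i.castSucc)) - g (t i.castSucc) (x (t i.castSucc))‖ ≤ u i := by
        have h3 := H1iii (t i.castSucc) (t i.succ) (htmem _).1 hlt (htmem _).2 (x (t i.castSucc))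
        have h4 := norm_nonneg (Dg (t i.succ) (x (t i.castSucc)) -
          Dg (t i.castSucc) (x (t i.castSucc)))
        simp only [hudef]
        linarith
      calc ‖g (t i.succ) (x (t i.succ)) - g (t i.castSucc) (x (t i.castSucc))‖
          = ‖(g (t i.succ) (x (t i.succ)) - g (t i.succ) (x (t i.castSucc))) +
              (g (t i.succ) (x (t i.castSucc)) - g (t i.castSucc) (x (t i.castSucc)))‖ := by
            rw [sub_add_sub_cancel]
        _ ≤ ‖g (t i.succ) (x (t i.succ)) - g (t i.succ) (x (t i.castSucc))‖ +
              ‖g (t i.succ) (x (t i.castSucc)) - g (t i.castSucc) (x (t i.castSucc))‖ :=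
            norm_add_le _ _
        _ ≤ w i + u i := add_le_add h1 h2
        _ = u i + w i := add_comm _ _
    set v : ℝ := ∑ i : Fin n, ‖g (t i.succ) (x (t i.succ)) -
        g (t i.castSucc) (x (t i.castSucc))‖ ^ q0 with hvdef
    have hvnn : 0 ≤ v :=
      Finset.sum_nonneg fun i _ => Real.rpow_nonneg (norm_nonneg _) q0
    have hA : (∑ i : Fin n, u i ^ q0) ^ (1 / q0) ≤ h 0 T ^ β := by
      have e1 : ∀ i : Fin n, u i ^ q0 = h (t i.castSucc) (t i.succ) ^ (β * q0) := by
        intro i; rw [hudef]; rw [Real.rpow_mul (hinn i)]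
      have hs1 : ∑ i : Fin n, u i ^ q0 ≤ (h 0 T) ^ (β * q0) := by
        rw [Finset.sum_congr rfl fun i _ => e1 i]
        have e2 : ∀ i : Fin n, h (t i.castSucc) (t i.succ) ^ (β * q0)
            = (fun j => h (t j.castSucc) (t j.succ)) i ^ (β * q0) := fun i => rfl
        calc ∑ i : Fin n, h (t i.castSucc) (t i.succ) ^ (β * q0)
            ≤ (∑ i : Fin n, h (t i.castSucc) (t i.succ)) ^ (β * q0) :=
              aux_sum_rpow _ _ (fun i _ => hinn i) hβq0
          _ ≤ (h 0 T) ^ (β * q0) := by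
              apply Real.rpow_le_rpow (Finset.sum_nonneg fun i _ => hinn i)
                _ (by linarith)
              calc ∑ i : Fin n, h (t i.castSucc) (t i.succ)
                  ≤ h (t 0) (t (Fin.last n)) :=
                    aux_ctrl_sum hsup' hnn' n t hmono.monotone (htmem 0).1 (htmem _).2
                _ ≤ h 0 T := by rw [hfirst, hlast]; exact hh01T
      calc (∑ i : Fin n, u i ^ q0) ^ (1 / q0)
          ≤ ((h 0 T) ^ (β * q0)) ^ (1 / q0) :=
            Real.rpow_le_rpow (Finset.sum_nonneg fun i _ =>
              Real.rpow_nonneg (hunn i) q0) hs1 (by positivity)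
        _ = h 0 T ^ β := by
            rw [← Real.rpow_mul h0T]
            congr 1
            field_simp
      -- done hA
    have hB : (∑ i : Fin n, w i ^ q0) ^ (1 / q0) ≤ Lg * Pq := by
      have hmemx : (∑ i : Fin n, ‖x (t i.succ) - x (t i.castSucc)‖ ^ q)
          ∈ pVarSums q x t0 t1 := ⟨n, t, hmono, hfirst, hlast, rfl⟩
      have hxle : (∑ i : Fin n, ‖x (t i.succ) - x (t i.castSucc)‖ ^ q)
          ≤ sSup (pVarSums q x t0 t1) := le_csSup hxq hmemx
      have hs2 : ∑ i : Fin n, w i ^ q0 ≤ Lg ^ q0 * (sSup (pVarSums q x t0 t1)) ^ (q0 / q) := by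
        have e3 : ∀ i : Fin n, w i ^ q0
            = Lg ^ q0 * ‖x (t i.succ) - x (t i.castSucc)‖ ^ q0 := by
          intro i; rw [hwdef]; exact Real.mul_rpow hLg.le (norm_nonneg _)
        rw [Finset.sum_congr rfl fun i _ => e3 i, ← Finset.mul_sum]
        apply mul_le_mul_of_nonneg_left _ (Real.rpow_nonneg hLg.le q0)
        calc ∑ i : Fin n, ‖x (t i.succ) - x (t i.castSucc)‖ ^ q0
            ≤ (∑ i : Fin n, ‖x (t i.succ) - x (t i.castSucc)‖ ^ q) ^ (q0 / q) :=
              aux_lq_emb _ _ (fun i _ => norm_nonneg _) hqpos hqq0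
          _ ≤ (sSup (pVarSums q x t0 t1)) ^ (q0 / q) :=
              Real.rpow_le_rpow (Finset.sum_nonneg fun i _ =>
                Real.rpow_nonneg (norm_nonneg _) q) hxle (by positivity)
      calc (∑ i : Fin n, w i ^ q0) ^ (1 / q0)
          ≤ (Lg ^ q0 * (sSup (pVarSums q x t0 t1)) ^ (q0 / q)) ^ (1 / q0) :=
            Real.rpow_le_rpow (Finset.sum_nonneg fun i _ =>
              Real.rpow_nonneg (hwnn i) q0) hs2 (by positivity)
        _ = Lg * Pq := by
            rw [Real.mul_rpow (Real.rpow_nonneg hLg.le q0)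
              (Real.rpow_nonneg hSqnn _), ← Real.rpow_mul hLg.le,
              ← Real.rpow_mul hSqnn]
            have e4 : q0 * (1 / q0) = 1 := by field_simp
            have e5 : q0 / q * (1 / q0) = 1 / q := by
              field_simp
            rw [e4, e5, Real.rpow_one]
            rfl
    have hvle : v ^ (1 / q0) ≤ D := by
      calc v ^ (1 / q0)
          ≤ (∑ i : Fin n, (u i + w i) ^ q0) ^ (1 / q0) := by
            apply Real.rpow_le_rpow hvnn _ (by positivity)
            apply Finset.sum_le_sum
            intro i _
            exact Real.rpow_le_rpow (norm_nonneg _) (hstep i) (by positivity)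
        _ ≤ (∑ i : Fin n, u i ^ q0) ^ (1 / q0) + (∑ i : Fin n, w i ^ q0) ^ (1 / q0) :=
            Real.Lp_add_le_of_nonneg Finset.univ hq0one (fun i _ => hunn i) (fun i _ => hwnn i)
        _ ≤ h 0 T ^ β + Lg * Pq := add_le_add hA hB
        _ = D := hDdef.symm
    have := Real.rpow_le_rpow (Real.rpow_nonneg hvnn _) hvle hq0pos.le
    rwa [← Real.rpow_mul hvnn, one_div, inv_mul_cancel₀ hq0pos.ne', Real.rpow_one] at this
  constructor
  · exact ⟨D ^ q0, fun v hv => key v hv⟩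
  · have hssnn : 0 ≤ sSup (pVarSums q0 (fun t => g t (x t)) t0 t1) :=
      Real.sSup_nonneg fun v hv => aux_mem_nonneg q0 (fun t => g t (x t)) t0 t1 v hv
    have hsle : sSup (pVarSums q0 (fun t => g t (x t)) t0 t1) ≤ D ^ q0 :=
      Real.sSup_le key (Real.rpow_nonneg hDnn q0)
    have hle1 : pVar q0 (fun t => g t (x t)) t0 t1 ≤ D := by
      have := Real.rpow_le_rpow hssnn hsle (by positivity : (0:ℝ) ≤ 1 / q0)
      calc pVar q0 (fun t => g t (x t)) t0 t1
          = sSup (pVarSums q0 (fun t => g t (x t)) t0 t1) ^ (1 / q0) := rfl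
        _ ≤ (D ^ q0) ^ (1 / q0) := this
        _ = D := by rw [one_div, Real.rpow_rpow_inv hDnn hq0pos.ne']
    refine le_trans hle1 ?_
    set M : ℝ := max (max Lg (a * T ^ (1 - α)))
      (max (‖g 0 0‖ + h 0 T ^ β)
        ((∫ s in (0:ℝ)..T, |b s| ^ (1 / (1 - α))) ^ (1 - α))) with hMdef
    have hM1 : h 0 T ^ β ≤ M :=
      le_trans (le_add_of_nonneg_left (norm_nonneg _))
        (le_max_of_le_right (le_max_left _ _))
    have hM2 : Lg ≤ M := le_max_of_le_left (le_max_left _ _)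
    calc D = h 0 T ^ β + Lg * Pq := hDdef
      _ ≤ M + M * Pq := add_le_add hM1 (mul_le_mul_of_nonneg_right hM2 hPqnn)
      _ = M * (1 + Pq) := by ring
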